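/- Let X̃_1 be the first generation space with τ_n = n and F(n,i) = 2^i. Then the centered maximal operator M^c is not of strong type (1,1): for f_n = δ_{x_n} one has ‖M^c f_n‖_1 ≥ (n/2) ‖f_n‖_1. -/

import Mathlib

open scoped ENNReal Classical
open Filter Set

/-- The point set of a first generation space: roots `x_n` (`Sum.inl n`) and
leaves `x_{n,i}` (`Sum.inr ⟨n, i⟩`, `i` among `τ n` leaves of branch `n`). -/
abbrev XPt (τ : ℕ → ℕ) := ℕ ⊕ (Σ n : ℕ, Fin (τ n))

namespace FirstGen

/-- The root `x_n`. -/
def root (τ : ℕ → ℕ) (n : ℕ) : XPt τ := Sum.inl n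

/-- The leaf `x_{n,i}`. -/
def leaf (τ : ℕ → ℕ) (n : ℕ) (i : Fin (τ n)) : XPt τ := Sum.inr ⟨n, i⟩

/-- The branch `S_n = {x_n, x_{n,1}, …, x_{n,τ_n}}`. -/
def branch (τ : ℕ → ℕ) (n : ℕ) : Set (XPt τ) :=
  {x | x = root τ n ∨ ∃ i, x = leaf τ n i}

/-- The two-point set `{x_n, x_{n,i}}`. -/
def pairB (τ : ℕ → ℕ) (n : ℕ) (i : Fin (τ n)) : Set (XPt τ) :=
  {root τ n, leaf τ n i}

/-- The collection of all open balls of `X_τ`: singletons, pairs `{x_n, x_{n,i}}`,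
branches `S_n` and the whole space. -/
def balls (τ : ℕ → ℕ) : Set (Set (XPt τ)) :=
  {B | (∃ x, B = {x}) ∨ (∃ n i, B = pairB τ n i) ∨ (∃ n, B = branch τ n) ∨ B = Set.univ}

/-- The ball `B(x, 3/2)` centered at `x`. -/
def cball (τ : ℕ → ℕ) : XPt τ → Set (XPt τ)
  | Sum.inl n => branch τ n
  | Sum.inr ⟨n, i⟩ => pairB τ n i

/-- The weight (measure of the singleton): `μ({x_n}) = d n`,
`μ({x_{n,i}}) = d n * F n i`. -/
noncomputable def weight (τ : ℕ → ℕ) (d : ℕ → ℝ≥0∞)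
    (F : (n : ℕ) → Fin (τ n) → ℝ≥0∞) : XPt τ → ℝ≥0∞
  | Sum.inl n => d n
  | Sum.inr ⟨n, i⟩ => d n * F n i

/-- Measure of a set. -/
noncomputable def mass {τ : ℕ → ℕ} (w : XPt τ → ℝ≥0∞) (s : Set (XPt τ)) : ℝ≥0∞ :=
  ∑' x : s, w x.1

/-- Average `A_s(f)` of `f` over `s`. -/
noncomputable def avg {τ : ℕ → ℕ} (w f : XPt τ → ℝ≥0∞) (s : Set (XPt τ)) : ℝ≥0∞ :=
  (∑' x : s, f x.1 * w x.1) / mass w s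

/-- The centered Hardy–Littlewood maximal operator of `X_τ` (the three balls
centered at `x` are `{x}`, `cball τ x` and the whole space). -/
noncomputable def Mc {τ : ℕ → ℕ} (w f : XPt τ → ℝ≥0∞) (x : XPt τ) : ℝ≥0∞ :=
  avg w f {x} ⊔ avg w f (cball τ x) ⊔ avg w f Set.univ

/-- The non-centered Hardy–Littlewood maximal operator of `X_τ`. -/
noncomputable def Mnc {τ : ℕ → ℕ} (w f : XPt τ → ℝ≥0∞) (x : XPt τ) : ℝ≥0∞ :=
  ⨆ (B : Set (XPt τ)) (_ : B ∈ balls τ) (_ : x ∈ B), avg w f B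

/-- `‖f‖_p^p = ∑_x f(x)^p μ({x})`. -/
noncomputable def lpp {τ : ℕ → ℕ} (w : XPt τ → ℝ≥0∞) (p : ℝ) (f : XPt τ → ℝ≥0∞) : ℝ≥0∞ :=
  ∑' x, f x ^ p * w x

/-- `T` is of strong type `(p,p)` (stated on the level of `p`-th powers). -/
def strongT {τ : ℕ → ℕ} (w : XPt τ → ℝ≥0∞)
    (T : (XPt τ → ℝ≥0∞) → XPt τ → ℝ≥0∞) (p : ℝ) : Prop :=
  ∃ C : ℝ≥0∞, C ≠ ∞ ∧ ∀ f, lpp w p (T f) ≤ C * lpp w p f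

/-- `T` is of weak type `(p,p)` (stated on the level of `p`-th powers). -/
def weakT {τ : ℕ → ℕ} (w : XPt τ → ℝ≥0∞)
    (T : (XPt τ → ℝ≥0∞) → XPt τ → ℝ≥0∞) (p : ℝ) : Prop :=
  ∃ C : ℝ≥0∞, C ≠ ∞ ∧ ∀ f (l : ℝ≥0∞), l ^ p * mass w {x | l < T f x} ≤ C * lpp w p f

/-- `‖g‖_{p,∞}^p`. -/
noncomputable def wnormP {τ : ℕ → ℕ} (w : XPt τ → ℝ≥0∞) (p : ℝ) (g : XPt τ → ℝ≥0∞) : ℝ≥0∞ :=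
  ⨆ l : ℝ≥0∞, l ^ p * mass w {x | l < g x}

/-- The Dirac function `δ_{x_n}`. -/
noncomputable def dirac (τ : ℕ → ℕ) (n : ℕ) : XPt τ → ℝ≥0∞ :=
  fun x => if x = root τ n then 1 else 0

end FirstGen

open FirstGen

/-- tsum over a pair set. -/
lemma pair_tsum {τ : ℕ → ℕ} (g : XPt τ → ℝ≥0∞) (n : ℕ) (i : Fin (τ n)) :
    ∑' x : pairB τ n i, g x.1 = g (root τ n) + g (leaf τ n i) := by
  have hfin : pairB τ n i = (({root τ n, leaf τ n i} : Finset (XPt τ)) : Set (XPt τ)) := by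
    simp [pairB]
  rw [hfin, Finset.tsum_subtype',
    Finset.sum_insert (by simp [root, leaf]), Finset.sum_singleton]

/-- in the first generation space `X̃₁` (branch `n` here is the
paper's branch `n+1`, with `τ n = n+1` leaves of weights `2^{i+1} d n`,
`i = 0, …, n`, masses of branches halving and `d 0 = 1`), the centered maximal
operator is not of strong type `(1,1)`: for `f_n = δ_{x_n}` one has
`‖M^c f_n‖₁ ≥ ((n+1)/2) ‖f_n‖₁`. -/
theorem Xtilde1_cen_not_strong (τ : ℕ → ℕ) (hτ : ∀ n : ℕ, τ n = n + 1)
    (d : ℕ → ℝ≥0∞) (hd : ∀ n, 0 < d n ∧ d n ≠ ∞) (hd1 : d 0 = 1)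
    (F : (n : ℕ) → Fin (τ n) → ℝ≥0∞) (hF : ∀ n i, F n i = 2 ^ ((i : ℕ) + 1))
    (hhalf : ∀ n, mass (weight τ d F) (branch τ (n + 1))
      = mass (weight τ d F) (branch τ n) / 2) :
    (∀ n : ℕ, (((n : ℝ≥0∞) + 1) / 2) * lpp (weight τ d F) 1 (dirac τ n)
      ≤ lpp (weight τ d F) 1 (Mc (weight τ d F) (dirac τ n))) ∧
    ¬ strongT (weight τ d F) (Mc (weight τ d F)) 1 := by
  set w := weight τ d F with hw
  have wroot : ∀ n, w (root τ n) = d n := fun n => rfl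
  have wleaf : ∀ n i, w (leaf τ n i) = d n * 2 ^ ((i : ℕ) + 1) := by
    intro n i
    show d n * F n i = _
    rw [hF]
  have hdir : ∀ n, lpp w 1 (dirac τ n) = d n := by
    intro n
    unfold lpp
    rw [tsum_congr (fun x => show dirac τ n x ^ (1 : ℝ) * w x
        = if x = root τ n then w (root τ n) else 0 by
      rcases eq_or_ne x (root τ n) with h | h <;> simp [dirac, h, ENNReal.rpow_one])]
    rw [tsum_ite_eq, wroot]
  have hmain : ∀ n : ℕ, (((n : ℝ≥0∞) + 1) / 2) * lpp w 1 (dirac τ n)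
      ≤ lpp w 1 (Mc w (dirac τ n)) := by
    intro n
    obtain ⟨hd0, hdt⟩ := hd n
    -- per-leaf bound
    have key : ∀ i : Fin (τ n),
        d n / 2 ≤ Mc w (dirac τ n) (leaf τ n i) * w (leaf τ n i) := by
      intro i
      set B : ℝ≥0∞ := 2 ^ ((i : ℕ) + 1) with hB
      have hB1 : (1 : ℝ≥0∞) ≤ B :=
        le_trans one_le_two (le_self_pow₀ one_le_two (Nat.succ_ne_zero _))
      have hB0 : B ≠ 0 := pow_ne_zero _ (by norm_num)
      have hBt : B ≠ ∞ := ENNReal.pow_ne_top (by norm_num)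
      have havg : avg w (dirac τ n) (pairB τ n i) = 1 / (1 + B) := by
        unfold avg mass
        rw [pair_tsum (fun x => dirac τ n x * w x), pair_tsum w]
        have h1 : dirac τ n (root τ n) = 1 := by simp [dirac]
        have h2 : dirac τ n (leaf τ n i) = 0 := by simp [dirac, leaf, root]
        rw [h1, h2, zero_mul, add_zero, one_mul, wroot, wleaf n i, ← hB]
        calc d n / (d n + d n * B) = d n * 1 / (d n * (1 + B)) := by
              rw [mul_one, mul_add, mul_one]
          _ = 1 / (1 + B) := ENNReal.mul_div_mul_left 1 (1 + B) hd0.ne' hdt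
      have hMc : avg w (dirac τ n) (pairB τ n i) ≤ Mc w (dirac τ n) (leaf τ n i) := by
        have hc : cball τ (leaf τ n i) = pairB τ n i := rfl
        exact le_sup_of_le_left (le_sup_of_le_right (le_of_eq (by rw [hc])))
      have hhalfB : (1 : ℝ≥0∞) / 2 ≤ B / (1 + B) := by
        have e1 : (1 : ℝ≥0∞) / 2 = B / (B * 2) := by
          rw [← ENNReal.mul_div_mul_left 1 2 hB0 hBt, mul_one]
        have e2 : B / (B * 2) ≤ B / (1 + B) :=
          ENNReal.div_le_div_left (by
            calc 1 + B ≤ B + B := add_le_add_left hB1 B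
              _ = B * 2 := by ring) B
        exact e1 ▸ e2
      calc d n / 2 = d n * (1 / 2) := by rw [mul_one_div]
        _ ≤ d n * (B / (1 + B)) := by gcongr
        _ = 1 / (1 + B) * (d n * B) := by
            simp only [div_eq_mul_inv, one_mul]; ring
        _ ≤ Mc w (dirac τ n) (leaf τ n i) * (d n * B) :=
            by gcongr; exact havg ▸ hMc
        _ = Mc w (dirac τ n) (leaf τ n i) * w (leaf τ n i) := by rw [wleaf n i, hB]
    have hinj : Function.Injective (fun i : Fin (τ n) => leaf τ n i) := by
      intro a b h
      simpa [leaf] using h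
    have sum_le : ∑' i : Fin (τ n), Mc w (dirac τ n) (leaf τ n i) * w (leaf τ n i)
        ≤ lpp w 1 (Mc w (dirac τ n)) := by
      unfold lpp
      have := ENNReal.tsum_comp_le_tsum_of_injective hinj
        (fun x => Mc w (dirac τ n) x ^ (1 : ℝ) * w x)
      simpa [ENNReal.rpow_one] using this
    have hconst : (((n : ℝ≥0∞) + 1) / 2) * d n = ∑' _i : Fin (τ n), d n / 2 := by
      rw [tsum_fintype, Finset.sum_const, Finset.card_univ, Fintype.card_fin, hτ n,
        nsmul_eq_mul]
      push_cast
      simp only [div_eq_mul_inv]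
      ring
    calc (((n : ℝ≥0∞) + 1) / 2) * lpp w 1 (dirac τ n)
        = (((n : ℝ≥0∞) + 1) / 2) * d n := by rw [hdir]
      _ = ∑' _i : Fin (τ n), d n / 2 := hconst
      _ ≤ ∑' i : Fin (τ n), Mc w (dirac τ n) (leaf τ n i) * w (leaf τ n i) :=
          ENNReal.tsum_le_tsum key
      _ ≤ lpp w 1 (Mc w (dirac τ n)) := sum_le
  refine ⟨hmain, ?_⟩
  rintro ⟨C, hC, h⟩
  obtain ⟨N, hN⟩ := ENNReal.exists_nat_gt (ENNReal.mul_ne_top (by norm_num) hC :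
    2 * C ≠ ∞)
  have h1 := hmain N
  have h2 := h (dirac τ N)
  rw [hdir] at h1 h2
  have h3 : (((N : ℝ≥0∞) + 1) / 2) * d N ≤ C * d N := le_trans h1 h2
  have h4 : ((N : ℝ≥0∞) + 1) / 2 ≤ C :=
    (ENNReal.mul_le_mul_iff_left (hd N).1.ne' (hd N).2).mp h3
  have h5 : (N : ℝ≥0∞) + 1 ≤ C * 2 :=
    (ENNReal.div_le_iff_le_mul (b := 2) (c := C) (Or.inl two_ne_zero)
      (Or.inl (by norm_num))).mp h4
  have h6 : (2 : ℝ≥0∞) * C < (N : ℝ≥0∞) + 1 := lt_of_lt_of_le hN le_self_add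
  exact absurd (h6.trans_le (h5.trans_eq (mul_comm C 2))) (lt_irrefl _)
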